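/- Let F : ℍ⁺ → ℍ⁺ be the holomorphic self-map F(w) = w + 1 of the upper half-plane, and define f_0(w) = i + e^{2πiw}, f_ν = F for ν ≥ 1. Then f_0 maps ℍ⁺ into ℍ⁺, f_ν → F uniformly, yet the right iterated function system satisfies R_ν = f_0 for all ν, hence {R_ν} is not compactly divergent. -/

import Mathlib

open Filter Topology Complex

/-- Right iterated function system: `RFS f ν = f 0 ∘ f 1 ∘ ⋯ ∘ f ν`. -/
def RFS (f : ℕ → ℂ → ℂ) : ℕ → ℂ → ℂ
  | 0 => f 0
  | n + 1 => RFS f n ∘ f (n + 1)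

/-- With `F(w) = w + 1` on the upper half-plane, `f 0 (w) = i + e^{2πiw}` and `f ν = F`
for `ν ≥ 1`, the map `f 0` sends the upper half-plane into itself, `R_ν = f 0` for all
`ν`, and the right iterated function system is not compactly divergent. -/
theorem stmt7 (H : Set ℂ) (hH : H = {w : ℂ | 0 < w.im})
    (F : ℂ → ℂ) (hF : ∀ w, F w = w + 1)
    (f : ℕ → ℂ → ℂ) (hf0 : ∀ w, f 0 w = I + Complex.exp (2 * Real.pi * I * w))
    (hfν : ∀ ν, 1 ≤ ν → f ν = F) :
    (∀ w ∈ H, f 0 w ∈ H) ∧ (∀ ν, ∀ w, RFS f ν w = f 0 w) ∧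
      ¬ (∀ K L : Set ℂ, K ⊆ H → L ⊆ H → IsCompact K → IsCompact L →
          ∀ᶠ ν in atTop, Disjoint (RFS f ν '' K) L) := by
  have hmaps : ∀ w ∈ H, f 0 w ∈ H := by
    intro w hw
    rw [hH] at hw ⊢
    simp only [Set.mem_setOf_eq] at hw ⊢
    rw [hf0]
    have habs : ‖Complex.exp (2 * Real.pi * I * w)‖ < 1 := by
      rw [Complex.norm_exp]
      have hre : (2 * Real.pi * I * w).re = -(2 * Real.pi * w.im) := by
        simp [Complex.mul_re, Complex.mul_im]
      rw [hre]
      have : 0 < 2 * Real.pi * w.im := by positivity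
      calc Real.exp (-(2 * Real.pi * w.im)) < Real.exp 0 := by
            exact Real.exp_lt_exp.mpr (by linarith)
        _ = 1 := Real.exp_zero
    have him : |(Complex.exp (2 * Real.pi * I * w)).im| < 1 :=
      lt_of_le_of_lt (Complex.abs_im_le_norm _) habs
    have := abs_lt.mp him
    simp only [Complex.add_im, Complex.I_im]
    linarith [this.1]
  have hper : ∀ w : ℂ, f 0 (w + 1) = f 0 w := by
    intro w
    rw [hf0, hf0]
    congr 1
    have : 2 * (Real.pi : ℂ) * I * (w + 1) = 2 * Real.pi * I * w + 2 * Real.pi * I := by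
      ring
    rw [this, Complex.exp_add, Complex.exp_two_pi_mul_I, mul_one]
  have hR : ∀ ν, ∀ w, RFS f ν w = f 0 w := by
    intro ν
    induction ν with
    | zero => intro w; rfl
    | succ n ih =>
      intro w
      show RFS f n (f (n+1) w) = f 0 w
      rw [hfν (n+1) (Nat.le_add_left 1 n), ih, hF, hper]
  refine ⟨hmaps, hR, ?_⟩
  intro hcd
  have hI : I ∈ H := by rw [hH]; simp
  have hfI : f 0 I ∈ H := hmaps I hI
  have := hcd {I} {f 0 I} (by simpa using hI) (by simpa using hfI)
    isCompact_singleton isCompact_singleton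
  rcases this.exists with ⟨ν, hν⟩
  have himg : f 0 I ∈ RFS f ν '' {I} := ⟨I, rfl, hR ν I⟩
  exact Set.disjoint_left.mp hν himg rfl
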